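/- arXiv:1108.0095 — 5 statements merged into one kernel-verified Lean document; each statement's English description precedes it below -/
import Mathlib

section
/- There is an absolute constant $K$ such that for every integer $a \ge 1$, every non-principal Dirichlet character $\chi$ modulo $a$, and every $s = \sigma + it$ with $\sigma \ge 1$ and $t \in \mathbb{R}$, one has $|L(s,\chi)| \le K \log\big(a(2 + |t|)\big)$. -/
set_option linter.unusedSectionVars false

open Finset Complex Filter Topology

namespace LBoundAux

variable {a : ℕ} [NeZero a] {χ : DirichletCharacter ℂ a}



lemma block_sum (hχ : χ ≠ 1) (k : ℕ) : ∑ j ∈ range a, χ ((k + j : ℕ) : ZMod a) = 0 := by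
  have h1 : ∑ j ∈ range a, χ ((k + j : ℕ) : ZMod a) = ∑ x : ZMod a, χ ((k : ZMod a) + x) := by
    refine Finset.sum_nbij' (fun j => ((j : ZMod a))) (fun x => x.val) ?_ ?_ ?_ ?_ ?_
    · intro x _; exact Finset.mem_univ _
    · intro x _; exact Finset.mem_range.mpr (ZMod.val_lt x)
    · intro x hx; exact ZMod.val_cast_of_lt (Finset.mem_range.mp hx)
    · intro x _; exact ZMod.natCast_rightInverse x
    · intro j _; push_cast; ring_nf
  rw [h1]
  have := Equiv.sum_comp (Equiv.addLeft ((k : ZMod a))) (fun x => χ x)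
  simp only [Equiv.coe_addLeft] at this
  rw [this]
  exact MulChar.sum_eq_zero_of_ne_one hχ

lemma charsum_le (hχ : χ ≠ 1) (m : ℕ) : ‖∑ n ∈ range m, χ (n : ZMod a)‖ ≤ (a : ℝ) := by
  induction m using Nat.strong_induction_on with
  | _ m ih =>
    rcases lt_or_ge m a with h | h
    · calc ‖∑ n ∈ range m, χ (n : ZMod a)‖ ≤ ∑ n ∈ range m, ‖χ (n : ZMod a)‖ :=
            norm_sum_le _ _
        _ ≤ ∑ _n ∈ range m, (1:ℝ) := Finset.sum_le_sum fun i _ => χ.norm_le_one _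
        _ = m := by simp
        _ ≤ a := by exact_mod_cast h.le
    · have key : ∑ n ∈ range m, χ (n : ZMod a) = ∑ n ∈ range (m - a), χ (n : ZMod a) := by
        have hz : ∑ n ∈ Ico (m - a) m, χ (n : ZMod a) = 0 := by
          rw [Finset.sum_Ico_eq_sum_range]
          have hma : m - (m - a) = a := by omega
          rw [hma]
          exact block_sum hχ (m - a)
        have hsplit := Finset.sum_Ico_consecutive (fun n : ℕ => χ (n : ZMod a))
          (Nat.zero_le (m - a)) (Nat.sub_le m a)
        rw [range_eq_Ico, ← hsplit, hz, add_zero, ← range_eq_Ico]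
      rw [key]
      exact ih (m - a) (by have := (NeZero.pos a); omega)



lemma cpow_deriv (s : ℂ) {x : ℝ} (hx : 0 < x) :
    HasDerivAt (fun y : ℝ => (y : ℂ) ^ (-s)) (-s * (x : ℂ) ^ (-s - 1)) x := by
  have h0 : ((x : ℂ)) ∈ Complex.slitPlane := Or.inl (by simpa using hx)
  have := ((Complex.hasStrictDerivAt_cpow_const (c := -s) h0).hasDerivAt).comp_ofReal
  simpa using this

lemma cpow_sub_bound {s : ℂ} (hσ : 1 ≤ s.re) {i : ℕ} (hi : 1 ≤ i) :
    ‖((i : ℂ) + 1) ^ (-s) - (i : ℂ) ^ (-s)‖ ≤ ‖s‖ * ((i : ℝ) ^ 2)⁻¹ := by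
  have hi1 : (1 : ℝ) ≤ (i : ℝ) := by exact_mod_cast hi
  have key := Convex.norm_image_sub_le_of_norm_hasDerivWithin_le
    (f := fun y : ℝ => (y : ℂ) ^ (-s)) (f' := fun x : ℝ => -s * (x : ℂ) ^ (-s - 1))
    (C := ‖s‖ * ((i : ℝ) ^ 2)⁻¹) (s := Set.Icc (i : ℝ) ((i : ℝ) + 1))
    (fun x hx => ((cpow_deriv s (lt_of_lt_of_le (by linarith) hx.1)).hasDerivWithinAt))
    ?_ (convex_Icc _ _) (Set.left_mem_Icc.mpr (by linarith)) (Set.right_mem_Icc.mpr (by linarith))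
  · have : ((i : ℝ) : ℂ) = (i : ℂ) := by push_cast; rfl
    calc ‖((i : ℂ) + 1) ^ (-s) - (i : ℂ) ^ (-s)‖
        = ‖(((i : ℝ) + 1 : ℝ) : ℂ) ^ (-s) - (((i : ℝ) : ℝ) : ℂ) ^ (-s)‖ := by push_cast; ring_nf
      _ ≤ ‖s‖ * ((i : ℝ) ^ 2)⁻¹ * ‖(i : ℝ) + 1 - (i : ℝ)‖ := key
      _ = ‖s‖ * ((i : ℝ) ^ 2)⁻¹ := by simp
  · intro x hx
    have hx1 : (1 : ℝ) ≤ x := le_trans hi1 hx.1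
    have hx0 : (0 : ℝ) < x := by linarith
    rw [norm_mul, norm_neg]
    gcongr ‖s‖ * ?_
    have hnorm : ‖(x : ℂ) ^ (-s - 1)‖ = x ^ ((-s - 1).re) := by
      rw [Complex.norm_cpow_eq_rpow_re_of_pos hx0]
    rw [hnorm]
    have h1 : x ^ ((-s - 1).re) ≤ x ^ (-2 : ℝ) := by
      apply Real.rpow_le_rpow_of_exponent_le hx1
      simp only [Complex.sub_re, Complex.neg_re, Complex.one_re]
      linarith
    have h2 : x ^ (-2 : ℝ) = (x ^ 2)⁻¹ := by
      rw [Real.rpow_neg hx0.le, ← Real.rpow_natCast x 2]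
      norm_num
    calc x ^ ((-s - 1).re) ≤ (x ^ 2)⁻¹ := by rw [← h2]; exact h1
      _ ≤ ((i : ℝ) ^ 2)⁻¹ := by
          apply inv_anti₀ (by positivity)
          exact pow_le_pow_left₀ (by linarith) hx.1 2




lemma norm_F_le_inv {s : ℂ} (h1 : 1 ≤ s.re) {n : ℕ} (hn : 1 ≤ n) :
    ‖(n : ℂ) ^ (-s)‖ ≤ (n : ℝ)⁻¹ := by
  have hn1 : (1 : ℝ) ≤ (n : ℝ) := by exact_mod_cast hn
  rw [Complex.norm_natCast_cpow_of_pos hn]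
  calc (n : ℝ) ^ ((-s).re) ≤ (n : ℝ) ^ (-1 : ℝ) := by
        apply Real.rpow_le_rpow_of_exponent_le hn1
        simp only [Complex.neg_re]; linarith
    _ = (n : ℝ)⁻¹ := Real.rpow_neg_one _

lemma norm_F_le_invsq {s : ℂ} (h2 : 2 ≤ s.re) {n : ℕ} (hn : 1 ≤ n) :
    ‖(n : ℂ) ^ (-s)‖ ≤ ((n : ℝ) ^ 2)⁻¹ := by
  have hn1 : (1 : ℝ) ≤ (n : ℝ) := by exact_mod_cast hn
  rw [Complex.norm_natCast_cpow_of_pos hn]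
  calc (n : ℝ) ^ ((-s).re) ≤ (n : ℝ) ^ (-2 : ℝ) := by
        apply Real.rpow_le_rpow_of_exponent_le hn1
        simp only [Complex.neg_re]; linarith
    _ = ((n : ℝ) ^ 2)⁻¹ := by
        rw [Real.rpow_neg (by linarith), ← Real.rpow_natCast (n : ℝ) 2]
        norm_num

lemma head_bound {s : ℂ} (h1 : 1 ≤ s.re) (K : ℕ) :
    ∑ n ∈ Ico 1 K, ‖(n : ℂ) ^ (-s) * (χ (n : ZMod a) : ℂ)‖ ≤ 1 + Real.log K := by
  rcases Nat.eq_zero_or_pos K with rfl | hK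
  · simp
  have step1 : ∑ n ∈ Ico 1 K, ‖(n : ℂ) ^ (-s) * (χ (n : ZMod a) : ℂ)‖ ≤
      ∑ n ∈ Ico 1 K, (n : ℝ)⁻¹ := by
    apply Finset.sum_le_sum
    intro n hn
    have hn1 : 1 ≤ n := (Finset.mem_Ico.mp hn).1
    calc ‖(n : ℂ) ^ (-s) * (χ (n : ZMod a) : ℂ)‖
        = ‖(n : ℂ) ^ (-s)‖ * ‖(χ (n : ZMod a) : ℂ)‖ := norm_mul _ _
      _ ≤ (n : ℝ)⁻¹ * 1 := by
          apply mul_le_mul (norm_F_le_inv h1 hn1) (χ.norm_le_one _) (norm_nonneg _) (by positivity)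
      _ = (n : ℝ)⁻¹ := mul_one _
  have step2 : ∑ n ∈ Ico 1 K, (n : ℝ)⁻¹ = (harmonic (K - 1) : ℝ) := by
    have hKK : Icc 1 (K - 1) = Ico 1 K := by
      rw [← Finset.Ico_add_one_right_eq_Icc]
      congr 1
      omega
    rw [harmonic_eq_sum_Icc, hKK]
    push_cast
    rfl
  have step3 : (harmonic (K - 1) : ℝ) ≤ 1 + Real.log (K - 1 : ℕ) := harmonic_le_one_add_log _
  have step4 : Real.log (K - 1 : ℕ) ≤ Real.log K := by
    rcases Nat.eq_zero_or_pos (K - 1) with h | h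
    · rw [h]
      simpa using Real.log_natCast_nonneg K
    · apply Real.log_le_log (by exact_mod_cast h)
      exact_mod_cast Nat.sub_le K 1
  linarith

lemma bound_two {s : ℂ} (h2 : 2 ≤ s.re) (M : ℕ) :
    ‖∑ n ∈ Ico 1 M, (n : ℂ) ^ (-s) * (χ (n : ZMod a) : ℂ)‖ ≤ 2 := by
  calc ‖∑ n ∈ Ico 1 M, (n : ℂ) ^ (-s) * (χ (n : ZMod a) : ℂ)‖
      ≤ ∑ n ∈ Ico 1 M, ‖(n : ℂ) ^ (-s) * (χ (n : ZMod a) : ℂ)‖ := norm_sum_le _ _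
    _ ≤ ∑ n ∈ Ico 1 M, ((n : ℝ) ^ 2)⁻¹ := by
        apply Finset.sum_le_sum
        intro n hn
        have hn1 : 1 ≤ n := (Finset.mem_Ico.mp hn).1
        calc ‖(n : ℂ) ^ (-s) * (χ (n : ZMod a) : ℂ)‖
            = ‖(n : ℂ) ^ (-s)‖ * ‖(χ (n : ZMod a) : ℂ)‖ := norm_mul _ _
          _ ≤ ((n : ℝ) ^ 2)⁻¹ * 1 := by
              apply mul_le_mul (norm_F_le_invsq h2 hn1) (χ.norm_le_one _) (norm_nonneg _)
                (by positivity)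
          _ = ((n : ℝ) ^ 2)⁻¹ := mul_one _
    _ = ∑ n ∈ Ioo 0 M, ((n : ℝ) ^ 2)⁻¹ := by rw [← Finset.Ico_add_one_left_eq_Ioo, zero_add]
    _ ≤ 2 / ((0 : ℕ) + 1) := sum_Ioo_inv_sq_le 0 M
    _ = 2 := by norm_num




lemma tail_bound (hχ : χ ≠ 1) {s : ℂ} (h1 : 1 ≤ s.re) {N M : ℕ} (hN : 2 ≤ N) (hNM : N < M) :
    ‖∑ n ∈ Ico N M, (n : ℂ) ^ (-s) * (χ (n : ZMod a) : ℂ)‖ ≤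
      2 * a / N + ‖s‖ * a * (2 / N) := by
  have hNpos : (0 : ℝ) < N := by positivity
  have habel := Finset.sum_Ico_by_parts (fun n : ℕ => (n : ℂ) ^ (-s))
    (fun n : ℕ => (χ (n : ZMod a) : ℂ)) hNM
  simp only [smul_eq_mul] at habel
  rw [habel]
  have hGa : ∀ m : ℕ, ‖∑ i ∈ range m, (χ (i : ZMod a) : ℂ)‖ ≤ (a : ℝ) := charsum_le hχ
  have hM1 : N ≤ M - 1 := by omega
  have hM1' : (N : ℝ) ≤ ((M - 1 : ℕ) : ℝ) := by exact_mod_cast hM1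
  have t1 : ‖((M - 1 : ℕ) : ℂ) ^ (-s) * ∑ i ∈ range M, (χ (i : ZMod a) : ℂ)‖ ≤
      (N : ℝ)⁻¹ * a := by
    rw [norm_mul]
    apply mul_le_mul _ (hGa M) (norm_nonneg _) (by positivity)
    calc ‖((M - 1 : ℕ) : ℂ) ^ (-s)‖ ≤ ((M - 1 : ℕ) : ℝ)⁻¹ := norm_F_le_inv h1 (by omega)
      _ ≤ (N : ℝ)⁻¹ := by apply inv_anti₀ hNpos hM1'
  have t2 : ‖(N : ℂ) ^ (-s) * ∑ i ∈ range N, (χ (i : ZMod a) : ℂ)‖ ≤ (N : ℝ)⁻¹ * a := by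
    rw [norm_mul]
    apply mul_le_mul _ (hGa N) (norm_nonneg _) (by positivity)
    exact norm_F_le_inv h1 (by omega)
  have t3 : ‖∑ i ∈ Ico N (M - 1), (((i + 1 : ℕ) : ℂ) ^ (-s) - (i : ℂ) ^ (-s)) *
      ∑ j ∈ range (i + 1), (χ (j : ZMod a) : ℂ)‖ ≤ ‖s‖ * a * (2 / N) := by
    calc ‖∑ i ∈ Ico N (M - 1), (((i + 1 : ℕ) : ℂ) ^ (-s) - (i : ℂ) ^ (-s)) *
        ∑ j ∈ range (i + 1), (χ (j : ZMod a) : ℂ)‖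
        ≤ ∑ i ∈ Ico N (M - 1), ‖(((i + 1 : ℕ) : ℂ) ^ (-s) - (i : ℂ) ^ (-s)) *
          ∑ j ∈ range (i + 1), (χ (j : ZMod a) : ℂ)‖ := norm_sum_le _ _
      _ ≤ ∑ i ∈ Ico N (M - 1), ‖s‖ * ((i : ℝ) ^ 2)⁻¹ * a := by
          apply Finset.sum_le_sum
          intro i hi
          have hi1 : 1 ≤ i := le_trans (by omega) (Finset.mem_Ico.mp hi).1
          rw [norm_mul]
          apply mul_le_mul _ (hGa (i + 1)) (norm_nonneg _) (by positivity)
          have : ((i + 1 : ℕ) : ℂ) = (i : ℂ) + 1 := by push_cast; ring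
          rw [this]
          exact cpow_sub_bound h1 hi1
      _ = ‖s‖ * a * ∑ i ∈ Ico N (M - 1), ((i : ℝ) ^ 2)⁻¹ := by
          rw [Finset.mul_sum]; apply Finset.sum_congr rfl; intro i _; ring
      _ ≤ ‖s‖ * a * (2 / N) := by
          apply mul_le_mul_of_nonneg_left _ (by positivity)
          calc ∑ i ∈ Ico N (M - 1), ((i : ℝ) ^ 2)⁻¹
              ≤ ∑ i ∈ Ioo (N - 1) (M - 1), ((i : ℝ) ^ 2)⁻¹ := by
                apply Finset.sum_le_sum_of_subset_of_nonneg
                · intro x hx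
                  rw [Finset.mem_Ioo]
                  rw [Finset.mem_Ico] at hx
                  omega
                · intro x _ _; positivity
            _ ≤ 2 / (((N - 1 : ℕ) : ℝ) + 1) := sum_Ioo_inv_sq_le (N - 1) (M - 1)
            _ = 2 / N := by
                congr 1
                have : ((N - 1 : ℕ) : ℝ) = (N : ℝ) - 1 := by
                  have : (1 : ℕ) ≤ N := by omega
                  push_cast [Nat.cast_sub this]
                  ring
                rw [this]; ring
  calc ‖((M - 1 : ℕ) : ℂ) ^ (-s) * ∑ i ∈ range M, (χ (i : ZMod a) : ℂ) -
        (N : ℂ) ^ (-s) * ∑ i ∈ range N, (χ (i : ZMod a) : ℂ) -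
        ∑ i ∈ Ico N (M - 1), (((i + 1 : ℕ) : ℂ) ^ (-s) - (i : ℂ) ^ (-s)) *
          ∑ j ∈ range (i + 1), (χ (j : ZMod a) : ℂ)‖
      ≤ ‖((M - 1 : ℕ) : ℂ) ^ (-s) * ∑ i ∈ range M, (χ (i : ZMod a) : ℂ) -
        (N : ℂ) ^ (-s) * ∑ i ∈ range N, (χ (i : ZMod a) : ℂ)‖ +
        ‖∑ i ∈ Ico N (M - 1), (((i + 1 : ℕ) : ℂ) ^ (-s) - (i : ℂ) ^ (-s)) *
          ∑ j ∈ range (i + 1), (χ (j : ZMod a) : ℂ)‖ := norm_sub_le _ _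
    _ ≤ ((N : ℝ)⁻¹ * a + (N : ℝ)⁻¹ * a) + ‖s‖ * a * (2 / N) := by
        apply add_le_add _ t3
        exact le_trans (norm_sub_le _ _) (add_le_add t1 t2)
    _ = 2 * a / N + ‖s‖ * a * (2 / N) := by ring





lemma key (hχ : χ ≠ 1) {s : ℂ} (h1 : 1 ≤ s.re) (h2 : s.re ≤ 2) {N : ℕ} (hN : 2 ≤ N) (M : ℕ) :
    ‖∑ n ∈ Ico 1 M, (n : ℂ) ^ (-s) * (χ (n : ZMod a) : ℂ)‖ ≤
      1 + Real.log N + (2 * a / N + ‖s‖ * a * (2 / N)) := by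
  have hrest : (0 : ℝ) ≤ 2 * a / N + ‖s‖ * a * (2 / N) := by positivity
  rcases le_or_gt M N with hMN | hMN
  · have : ‖∑ n ∈ Ico 1 M, (n : ℂ) ^ (-s) * (χ (n : ZMod a) : ℂ)‖ ≤ 1 + Real.log N := by
      calc ‖∑ n ∈ Ico 1 M, (n : ℂ) ^ (-s) * (χ (n : ZMod a) : ℂ)‖
          ≤ ∑ n ∈ Ico 1 M, ‖(n : ℂ) ^ (-s) * (χ (n : ZMod a) : ℂ)‖ := norm_sum_le _ _
        _ ≤ ∑ n ∈ Ico 1 N, ‖(n : ℂ) ^ (-s) * (χ (n : ZMod a) : ℂ)‖ :=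
            Finset.sum_le_sum_of_subset_of_nonneg
              (Finset.Ico_subset_Ico le_rfl hMN) (fun _ _ _ => norm_nonneg _)
        _ ≤ 1 + Real.log N := head_bound h1 N
    linarith
  · have hsplit : ∑ n ∈ Ico 1 M, (n : ℂ) ^ (-s) * (χ (n : ZMod a) : ℂ) =
        (∑ n ∈ Ico 1 N, (n : ℂ) ^ (-s) * (χ (n : ZMod a) : ℂ)) +
        ∑ n ∈ Ico N M, (n : ℂ) ^ (-s) * (χ (n : ZMod a) : ℂ) :=
      (Finset.sum_Ico_consecutive _ (by omega) hMN.le).symm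
    rw [hsplit]
    apply le_trans (norm_add_le _ _)
    apply add_le_add
    · exact le_trans (norm_sum_le _ _) (head_bound h1 N)
    · exact tail_bound hχ h1 hN hMN

lemma term_eq (s : ℂ) (hs : s ≠ 0) (n : ℕ) :
    LSeries.term (fun n : ℕ => (χ (n : ZMod a) : ℂ)) s n =
      (n : ℂ) ^ (-s) * (χ (n : ZMod a) : ℂ) := by
  rcases Nat.eq_zero_or_pos n with rfl | hn
  · simp [LSeries.term, Complex.zero_cpow (neg_ne_zero.mpr hs)]
  · rw [LSeries.term_of_ne_zero hn.ne', Complex.cpow_neg, div_eq_mul_inv, mul_comm]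

lemma range_to_Ico (s : ℂ) (hs : s ≠ 0) (M : ℕ) :
    ∑ n ∈ range M, (n : ℂ) ^ (-s) * (χ (n : ZMod a) : ℂ) =
      ∑ n ∈ Ico 1 M, (n : ℂ) ^ (-s) * (χ (n : ZMod a) : ℂ) := by
  rcases Nat.eq_zero_or_pos M with rfl | hM
  · simp
  rw [range_eq_Ico, Finset.sum_eq_sum_Ico_succ_bot hM]
  simp [Complex.zero_cpow (neg_ne_zero.mpr hs)]

lemma LFunction_le (hχ : χ ≠ 1) {s : ℂ} (h1 : 1 < s.re) :
    ‖DirichletCharacter.LFunction χ s‖ ≤ 10 * Real.log ((a : ℝ) * (2 + |s.im|)) := by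
  set X := (a : ℝ) * (2 + |s.im|) with hX
  have ha1 : (1 : ℝ) ≤ (a : ℝ) := by exact_mod_cast (NeZero.pos a)
  have habs : (0 : ℝ) ≤ |s.im| := abs_nonneg _
  have hX2 : (2 : ℝ) ≤ X := by nlinarith
  have hlog2lb : (0.6931471803 : ℝ) < Real.log 2 := Real.log_two_gt_d9
  have hlog2ub : Real.log 2 < 0.6931471808 := Real.log_two_lt_d9
  have hlogX : Real.log 2 ≤ Real.log X := Real.log_le_log two_pos hX2
  have hs0 : s ≠ 0 := by
    intro h
    rw [h] at h1
    norm_num at h1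
  -- convergence of partial sums
  have hsum : LSeriesSummable (fun n : ℕ => (χ (n : ZMod a) : ℂ)) s :=
    DirichletCharacter.LSeriesSummable_of_one_lt_re χ h1
  have hLS : DirichletCharacter.LFunction χ s = LSeries (fun n : ℕ => (χ (n : ZMod a) : ℂ)) s :=
    DirichletCharacter.LFunction_eq_LSeries χ h1
  have htend : Tendsto (fun M : ℕ => ∑ n ∈ range M, (n : ℂ) ^ (-s) * (χ (n : ZMod a) : ℂ))
      atTop (𝓝 (DirichletCharacter.LFunction χ s)) := by
    rw [hLS, LSeries]
    have h := hsum.hasSum.tendsto_sum_nat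
    convert h using 2 with M
    apply Finset.sum_congr rfl
    intro n _
    exact (term_eq s hs0 n).symm
  -- uniform bound on partial sums
  have hM : ∀ M : ℕ, ‖∑ n ∈ range M, (n : ℂ) ^ (-s) * (χ (n : ZMod a) : ℂ)‖ ≤
      10 * Real.log X := by
    intro M
    rw [range_to_Ico s hs0 M]
    rcases le_or_gt s.re 2 with hre2 | hre2
    · set N := ⌈X⌉₊ with hN
      have hXN : X ≤ (N : ℝ) := Nat.le_ceil X
      have hN1 : (N : ℝ) ≤ X + 1 := (Nat.ceil_lt_add_one (by linarith)).le
      have hN2 : 2 ≤ N := by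
        have : (2 : ℝ) ≤ (N : ℝ) := le_trans hX2 hXN
        exact_mod_cast this
      have hNpos : (0 : ℝ) < N := by positivity
      have hXpos : (0 : ℝ) < X := by linarith
      refine le_trans (key hχ h1.le hre2 hN2 M) ?_
      have hlogN : Real.log N ≤ Real.log 2 + Real.log X := by
        calc Real.log N ≤ Real.log (2 * X) := by
              apply Real.log_le_log hNpos
              linarith
          _ = Real.log 2 + Real.log X := Real.log_mul two_ne_zero (by linarith)
      have h2aN : 2 * (a : ℝ) / N ≤ 1 := by
        rw [div_le_one hNpos]
        nlinarith
      have hsnorm : ‖s‖ ≤ 2 + |s.im| := by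
        calc ‖s‖ ≤ |s.re| + |s.im| := Complex.norm_le_abs_re_add_abs_im s
          _ ≤ 2 + |s.im| := by
              have : |s.re| = s.re := abs_of_pos (by linarith)
              linarith [this]
      have hterm3 : ‖s‖ * (a : ℝ) * (2 / N) ≤ 2 := by
        have step : ‖s‖ * (a : ℝ) * (2 / N) ≤ (2 + |s.im|) * (a : ℝ) * (2 / X) := by
          apply mul_le_mul
          · apply mul_le_mul_of_nonneg_right hsnorm (by positivity)
          · apply div_le_div_of_nonneg_left (by norm_num) hXpos hXN
          · positivity
          · positivity
        have heq : (2 + |s.im|) * (a : ℝ) * (2 / X) = 2 := by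
          field_simp [hX]
          ring
        linarith
      linarith
    · refine le_trans (bound_two hre2.le M) ?_
      nlinarith
  exact le_of_tendsto htend.norm (Eventually.of_forall hM)

end LBoundAux

theorem LFunction_bound_on_re_ge_one :
    ∃ K : ℝ, ∀ (a : ℕ) [NeZero a] (χ : DirichletCharacter ℂ a), χ ≠ 1 →
      ∀ s : ℂ, 1 ≤ s.re →
        ‖DirichletCharacter.LFunction χ s‖ ≤ K * Real.log ((a : ℝ) * (2 + |s.im|)) := by
  refine ⟨10, fun a _ χ hχ s hs => ?_⟩
  have hcont : Continuous (DirichletCharacter.LFunction χ) :=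
    (DirichletCharacter.differentiable_LFunction hχ).continuous
  have htt : Filter.Tendsto (fun ε : ℝ => DirichletCharacter.LFunction χ (s + ε))
      (nhdsWithin 0 (Set.Ioi 0)) (nhds (DirichletCharacter.LFunction χ s)) := by
    have hadd : Filter.Tendsto (fun ε : ℝ => s + (ε : ℂ)) (nhdsWithin 0 (Set.Ioi 0)) (nhds s) := by
      have hc : Filter.Tendsto (fun ε : ℝ => s + (ε : ℂ)) (nhds 0) (nhds (s + ((0 : ℝ) : ℂ))) :=
        (continuous_const.add (Complex.continuous_ofReal)).tendsto 0
      simp only [Complex.ofReal_zero, add_zero] at hc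
      exact hc.mono_left nhdsWithin_le_nhds
    exact (hcont.tendsto s).comp hadd
  refine le_of_tendsto htt.norm ?_
  filter_upwards [self_mem_nhdsWithin] with ε hε
  have hε0 : (0 : ℝ) < ε := hε
  have hre : 1 < (s + (ε : ℂ)).re := by
    simp only [Complex.add_re, Complex.ofReal_re]
    linarith
  have := LBoundAux.LFunction_le hχ hre
  simpa only [Complex.add_im, Complex.ofReal_im, add_zero] using this
end

section
/- Let $a > 1$ be an integer and $w > 0$ a real number. Then $\sum_{\substack{1 \le n \le w \\ n \equiv -1 \ (\mathrm{mod}\ a)}} \frac{1}{n} = \frac{1}{a}\left(\log w - \frac{\Gamma'((a-1)/a)}{\Gamma((a-1)/a)} - \log a\right) + E(a,w)$, where $|E(a,w)| \le K a / w$ for an absolute constant $K$. -/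
open Finset

open Real Set Filter in
private lemma diffLG {x : ℝ} (hx : 0 < x) :
    DifferentiableAt ℝ (Real.log ∘ Real.Gamma) x := by
  have h : ∀ m : ℕ, x ≠ -m := fun m =>
    ne_of_gt (lt_of_le_of_lt (neg_nonpos.mpr (Nat.cast_nonneg m)) hx)
  exact (Real.differentiableAt_Gamma h).log (Real.Gamma_pos_of_pos hx).ne'

private lemma lg_rec {x : ℝ} (hx : 0 < x) :
    (Real.log ∘ Real.Gamma) (x + 1) = (Real.log ∘ Real.Gamma) x + Real.log x := by
  simp only [Function.comp_apply, Real.Gamma_add_one hx.ne',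
    Real.log_mul hx.ne' (Real.Gamma_pos_of_pos hx).ne', add_comm]

open Real Set Filter in
private lemma deriv_lg_rec {x : ℝ} (hx : 0 < x) :
    deriv (Real.log ∘ Real.Gamma) (x + 1) = deriv (Real.log ∘ Real.Gamma) x + 1 / x := by
  rw [← deriv_comp_add_const, one_div, ← Real.deriv_log,
    ← deriv_add (diffLG hx) (Real.differentiableAt_log hx.ne')]
  apply Filter.EventuallyEq.deriv_eq
  filter_upwards [eventually_gt_nhds hx] using fun t ht => lg_rec ht

private lemma deriv_lg_sum {x : ℝ} (hx : 0 < x) (N : ℕ) :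
    deriv (Real.log ∘ Real.Gamma) (x + N) =
      deriv (Real.log ∘ Real.Gamma) x + ∑ k ∈ Finset.range N, 1 / (x + k) := by
  induction N with
  | zero => simp
  | succ n ih =>
    have h : x + ((n : ℕ) + 1 : ℕ) = (x + n) + 1 := by push_cast; ring
    have hxn : 0 < x + (n : ℝ) := by positivity
    rw [h, deriv_lg_rec hxn, ih, Finset.sum_range_succ]
    ring

open Real Set in
private lemma lg_deriv_lb {t : ℝ} (ht : 0 < t) :
    Real.log t ≤ deriv (Real.log ∘ Real.Gamma) (t + 1) := by
  have h := Real.convexOn_log_Gamma.slope_le_deriv (mem_Ioi.mpr ht)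
      (mem_Ioi.mpr (by linarith : (0:ℝ) < t + 1)) (by linarith) (diffLG (by linarith))
  refine le_trans (le_of_eq ?_) h
  rw [slope_def_field, lg_rec ht, show t + 1 - t = 1 by ring]
  ring

open Real Set in
private lemma lg_deriv_ub {t : ℝ} (ht : 0 < t) :
    deriv (Real.log ∘ Real.Gamma) (t + 1) ≤ Real.log (t + 1) := by
  have h := Real.convexOn_log_Gamma.deriv_le_slope
      (mem_Ioi.mpr (by linarith : (0:ℝ) < t + 1))
      (mem_Ioi.mpr (by linarith : (0:ℝ) < t + 2)) (by linarith) (diffLG (by linarith))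
  refine h.trans (le_of_eq ?_)
  rw [slope_def_field, show t + 2 = (t + 1) + 1 by ring, lg_rec (by linarith : (0:ℝ) < t + 1),
    show t + 1 + 1 - (t + 1) = 1 by ring]
  ring

private lemma deriv_lg_eq {x : ℝ} (hx : 0 < x) :
    deriv (Real.log ∘ Real.Gamma) x = deriv Real.Gamma x / Real.Gamma x := by
  have h : ∀ m : ℕ, x ≠ -m := fun m =>
    ne_of_gt (lt_of_le_of_lt (neg_nonpos.mpr (Nat.cast_nonneg m)) hx)
  rw [Function.comp_def]
  exact deriv.log (Real.differentiableAt_Gamma h) (Real.Gamma_pos_of_pos hx).ne'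

open Real Set in
private lemma psi_bound {x : ℝ} (h1 : 1/2 ≤ x) (h2 : x < 1) :
    |deriv (Real.log ∘ Real.Gamma) x| ≤ 3 := by
  have hx : 0 < x := by linarith
  have hub : deriv (Real.log ∘ Real.Gamma) x ≤ deriv (Real.log ∘ Real.Gamma) 1 := by
    have a := Real.convexOn_log_Gamma.deriv_le_slope (mem_Ioi.mpr hx)
      (mem_Ioi.mpr one_pos) h2 (diffLG hx)
    have b := Real.convexOn_log_Gamma.slope_le_deriv (mem_Ioi.mpr hx)
      (mem_Ioi.mpr one_pos) h2 (diffLG one_pos)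
    exact a.trans b
  have h1' : deriv (Real.log ∘ Real.Gamma) 1 = -Real.eulerMascheroniConstant := by
    rw [deriv_lg_eq one_pos, Real.hasDerivAt_Gamma_one.deriv, Real.Gamma_one, div_one]
  have hd : deriv (Real.log ∘ Real.Gamma) (1/2)
      = -(Real.eulerMascheroniConstant + 2 * Real.log 2) := by
    have hs : (0:ℝ) < Real.sqrt Real.pi := Real.sqrt_pos.mpr Real.pi_pos
    rw [deriv_lg_eq (by norm_num), Real.hasDerivAt_Gamma_one_half.deriv, Real.Gamma_one_half_eq,
      div_eq_iff hs.ne']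
    ring
  have hlb : -(Real.eulerMascheroniConstant + 2 * Real.log 2)
      ≤ deriv (Real.log ∘ Real.Gamma) x := by
    rcases eq_or_lt_of_le h1 with h | h
    · rw [← h, hd]
    · have a := Real.convexOn_log_Gamma.deriv_le_slope
        (mem_Ioi.mpr (by norm_num : (0:ℝ) < 1/2)) (mem_Ioi.mpr hx) h (diffLG (by norm_num))
      have b := Real.convexOn_log_Gamma.slope_le_deriv
        (mem_Ioi.mpr (by norm_num : (0:ℝ) < 1/2)) (mem_Ioi.mpr hx) h (diffLG hx)
      rw [← hd]; exact a.trans b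
  have hγ1 : Real.eulerMascheroniConstant < 2/3 := Real.eulerMascheroniConstant_lt_two_thirds
  have hγ2 : 1/2 < Real.eulerMascheroniConstant := Real.one_half_lt_eulerMascheroniConstant
  have hl2 : Real.log 2 < 0.6931471808 := Real.log_two_lt_d9
  have hl2' : 0 < Real.log 2 := Real.log_pos (by norm_num)
  rw [abs_le]
  constructor <;> nlinarith

private lemma log_sub_log_le {p q : ℝ} (hp : 0 < p) (hq : 0 < q) :
    Real.log p - Real.log q ≤ (p - q) / q := by
  have h := Real.log_le_sub_one_of_pos (div_pos hp hq)
  rw [Real.log_div hp.ne' hq.ne'] at h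
  have h2 : p / q - 1 = (p - q) / q := by field_simp
  linarith

set_option maxHeartbeats 1600000 in
theorem sum_reciprocal_arithmetic_progression :
    ∃ K : ℝ, ∀ (a : ℕ) (w : ℝ), 1 < a → 0 < w →
      |(∑ n ∈ (Finset.Icc 1 ⌊w⌋₊).filter (fun n : ℕ => (↑n : ZMod a) = -1), (1 : ℝ) / n)
          - (1 / (a : ℝ)) * (Real.log w
              - deriv Real.Gamma (((a : ℝ) - 1) / a) / Real.Gamma (((a : ℝ) - 1) / a)
              - Real.log a)|
        ≤ K * a / w := by
  refine ⟨100, fun a w ha hw => ?_⟩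
  have ha0 : 0 < a := by omega
  have haR : (2:ℝ) ≤ a := by exact_mod_cast ha
  have haR0 : (0:ℝ) < a := by linarith
  set x : ℝ := ((a : ℝ) - 1) / a with hxdef
  have hxhalf : 1/2 ≤ x := by rw [hxdef, le_div_iff₀ haR0]; linarith
  have hxlt : x < 1 := by rw [hxdef, div_lt_one haR0]; linarith
  have hx : 0 < x := by linarith
  set N : ℕ := (⌊w⌋₊ + 1) / a with hNdef
  clear_value N
  -- congruence condition
  have hcong : ∀ n : ℕ, ((n : ZMod a) = -1) ↔ a ∣ (n + 1) := by
    intro n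
    rw [eq_neg_iff_add_eq_zero, show ((n : ZMod a) + 1) = ((n + 1 : ℕ) : ZMod a) by push_cast; ring,
      ZMod.natCast_eq_zero_iff]
  -- sum reindexing
  have hsum_eq : (∑ n ∈ (Finset.Icc 1 ⌊w⌋₊).filter (fun n : ℕ => (↑n : ZMod a) = -1), (1:ℝ)/n)
      = ∑ k ∈ Finset.range N, 1/(a:ℝ) * (1/(x + k)) := by
    refine Finset.sum_nbij' (fun n => (n+1)/a - 1) (fun k => (k+1)*a - 1) ?_ ?_ ?_ ?_ ?_
    · intro n hn
      rw [Finset.mem_filter, Finset.mem_Icc, hcong] at hn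
      obtain ⟨⟨hn1, hn2⟩, c, hc⟩ := hn
      have hc1 : 1 ≤ c := Nat.pos_of_ne_zero (by rintro rfl; simp at hc)
      have hdiv : (n+1)/a = c := by rw [hc, Nat.mul_div_cancel_left c ha0]
      have hcN : c ≤ N := by
        rw [hNdef, Nat.le_div_iff_mul_le ha0]
        calc c * a = a * c := Nat.mul_comm c a
          _ = n + 1 := hc.symm
          _ ≤ ⌊w⌋₊ + 1 := by omega
      rw [Finset.mem_range]
      show (n+1)/a - 1 < N
      omega
    · intro k hk
      rw [Finset.mem_range] at hk
      have hka : a ≤ (k+1)*a := Nat.le_mul_of_pos_left a (by omega)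
      have hle : (k+1)*a ≤ ⌊w⌋₊ + 1 := by
        calc (k+1)*a ≤ N*a := Nat.mul_le_mul_right a (by omega)
        _ ≤ ⌊w⌋₊ + 1 := by rw [hNdef]; exact Nat.div_mul_le_self _ _
      simp only [Finset.mem_filter, Finset.mem_Icc, hcong]
      have h2 : (k+1)*a = a*(k+1) := Nat.mul_comm _ _
      exact ⟨⟨by omega, by omega⟩, k+1, by omega⟩
    · intro n hn
      rw [Finset.mem_filter, Finset.mem_Icc, hcong] at hn
      obtain ⟨⟨hn1, hn2⟩, c, hc⟩ := hn
      have hc1 : 1 ≤ c := Nat.pos_of_ne_zero (by rintro rfl; simp at hc)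
      have hdiv : (n+1)/a = c := by rw [hc, Nat.mul_div_cancel_left c ha0]
      show ((n+1)/a - 1 + 1) * a - 1 = n
      rw [hdiv]
      have h2 : (c - 1 + 1) * a = a * c := by
        rw [Nat.sub_add_cancel hc1, Nat.mul_comm]
      omega
    · intro k hk
      have hka : a ≤ (k+1)*a := Nat.le_mul_of_pos_left a (by omega)
      have h1 : (k+1)*a - 1 + 1 = (k+1)*a := by omega
      show ((k+1)*a - 1 + 1)/a - 1 = k
      rw [h1, Nat.mul_comm, Nat.mul_div_cancel_left _ ha0]
      omega
    · intro n hn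
      rw [Finset.mem_filter, Finset.mem_Icc, hcong] at hn
      obtain ⟨⟨hn1, hn2⟩, c, hc⟩ := hn
      have hc1 : 1 ≤ c := Nat.pos_of_ne_zero (by rintro rfl; simp at hc)
      have hdiv : (n+1)/a = c := by rw [hc, Nat.mul_div_cancel_left c ha0]
      show (1:ℝ)/n = 1/(a:ℝ) * (1/(x + (((n+1)/a - 1 : ℕ) : ℝ)))
      rw [hdiv]
      have hcast : ((c - 1 : ℕ) : ℝ) = (c : ℝ) - 1 := by
        rw [Nat.cast_sub hc1, Nat.cast_one]
      have hnne : (0:ℝ) < (n:ℝ) := by exact_mod_cast hn1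
      have hcR : ((n:ℝ) + 1) = (a:ℝ) * c := by exact_mod_cast hc
      rw [hcast, hxdef]
      have hxc : ((a:ℝ) - 1)/a + ((c:ℝ) - 1) = (n:ℝ)/a := by
        rw [div_add' _ _ _ haR0.ne', div_eq_div_iff haR0.ne' haR0.ne']
        nlinarith [hcR]
      rw [hxc]
      field_simp
  -- setting D
  set D := deriv (Real.log ∘ Real.Gamma) with hD
  clear_value D
  have hsum2 : (∑ k ∈ Finset.range N, 1/(a:ℝ) * (1/(x + k)))
      = 1/(a:ℝ) * (D (x + N) - D x) := by
    rw [hD, deriv_lg_sum hx N, ← Finset.mul_sum]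
    ring
  have hkey : (∑ n ∈ (Finset.Icc 1 ⌊w⌋₊).filter (fun n : ℕ => (↑n : ZMod a) = -1), (1:ℝ)/n)
      - (1 / (a : ℝ)) * (Real.log w - deriv Real.Gamma x / Real.Gamma x - Real.log a)
      = (1/(a:ℝ)) * (D (x + N) - (Real.log w - Real.log a)) := by
    rw [hsum_eq, hsum2, ← deriv_lg_eq hx, ← hD]
    ring
  rw [hkey]
  -- floor facts
  have hfl : (⌊w⌋₊ : ℝ) ≤ w := Nat.floor_le hw.le
  have hfl2 : w < (⌊w⌋₊ : ℝ) + 1 := Nat.lt_floor_add_one w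
  have hNu : (N : ℝ) * a ≤ w + 1 := by
    have h : N * a ≤ ⌊w⌋₊ + 1 := by rw [hNdef]; exact Nat.div_mul_le_self _ _
    have h' : ((N * a : ℕ) : ℝ) ≤ (⌊w⌋₊ : ℝ) + 1 := by exact_mod_cast h
    push_cast at h'
    linarith
  have hNl : w < ((N : ℝ) + 1) * a := by
    have h : ⌊w⌋₊ + 1 < (N + 1) * a := by
      rcases Nat.lt_or_ge (⌊w⌋₊ + 1) ((N + 1) * a) with h | h
      · exact h
      · exfalso
        have h2 : N + 1 ≤ (⌊w⌋₊ + 1) / a := (Nat.le_div_iff_mul_le ha0).mpr h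
        rw [← hNdef] at h2
        omega
    have h' : ((⌊w⌋₊ : ℝ) + 1) ≤ ((N : ℝ) + 1) * a := by exact_mod_cast Nat.le_of_lt h
    linarith
  have hlogdiv : Real.log w - Real.log a = Real.log (w / a) :=
    (Real.log_div hw.ne' haR0.ne').symm
  -- suffices to bound the inner quantity
  have hmain : |D (x + N) - (Real.log w - Real.log a)| ≤ 100 * a * a / w → 
      |(1/(a:ℝ)) * (D (x + N) - (Real.log w - Real.log a))| ≤ 100 * a / w := by
    intro hQ
    rw [abs_mul, abs_of_pos (by positivity : (0:ℝ) < 1/(a:ℝ))]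
    calc 1/(a:ℝ) * |D (x + N) - (Real.log w - Real.log a)|
        ≤ 1/(a:ℝ) * (100 * a * a / w) :=
          mul_le_mul_of_nonneg_left hQ (by positivity)
      _ = 100 * a / w := by field_simp
  apply hmain
  rw [hlogdiv]
  set u : ℝ := w / a with hu
  clear_value u
  have hu0 : 0 < u := by rw [hu]; positivity
  by_cases hcase : 4 * (a:ℝ) ≤ w
  · -- large w
    have hu4 : 4 ≤ u := by rw [hu, le_div_iff₀ haR0]; linarith
    have hN4 : 4 ≤ N := by
      have h4a : 4 * a ≤ ⌊w⌋₊ := Nat.le_floor (by push_cast; linarith)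
      rw [hNdef, Nat.le_div_iff_mul_le ha0]
      omega
    have hNR : (4:ℝ) ≤ N := by exact_mod_cast hN4
    have hxNu : x + (N:ℝ) < u + 2 := by
      have : (N:ℝ) ≤ u + 1/a := by
        rw [hu]
        rw [← add_div, le_div_iff₀ haR0]
        linarith
      have h1a : 1/(a:ℝ) ≤ 1 := by rw [div_le_one haR0]; linarith
      linarith
    have hxNl : u - 1 < x + (N:ℝ) := by
      have : u < (N:ℝ) + 1 := by rw [hu, div_lt_iff₀ haR0]; linarith
      linarith
    have ht1 : 0 < x + (N:ℝ) - 1 := by linarith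
    have hlb : Real.log (x + N - 1) ≤ D (x + N) := by
      have h := lg_deriv_lb ht1
      rw [show x + (N:ℝ) - 1 + 1 = x + N by ring] at h
      rw [hD]; exact h
    have hub : D (x + N) ≤ Real.log (x + N) := by
      have h := lg_deriv_ub ht1
      rw [show x + (N:ℝ) - 1 + 1 = x + N by ring] at h
      rw [hD]; exact h
    have hA : Real.log (x + N) - Real.log u ≤ 2 / u := by
      have h1 := log_sub_log_le (by linarith : (0:ℝ) < x + N) hu0
      have h2 : (x + (N:ℝ) - u) / u ≤ 2 / u := by gcongr; linarith
      linarith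
    have hB : Real.log u - Real.log (x + N - 1) ≤ 4 / u := by
      have h1 := log_sub_log_le hu0 ht1
      have h2 : (u - (x + (N:ℝ) - 1)) / (x + N - 1) ≤ 2 / (x + N - 1) := by
        gcongr; linarith
      have h3 : 2 / (x + (N:ℝ) - 1) ≤ 4 / u := by
        rw [div_le_div_iff₀ ht1 hu0]
        linarith
      linarith
    have h4u : 4 / u ≤ 100 * a * a / w := by
      have h1 : 4 / u = 4 * a / w := by rw [hu]; field_simp
      rw [h1]
      exact (div_le_div_iff_of_pos_right hw).mpr (by nlinarith)
    have h2u : 2 / u ≤ 4 / u := by gcongr <;> norm_num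
    rw [abs_le]
    refine ⟨by linarith, by linarith⟩
  · -- small w : w < 4a
    push_neg at hcase
    have hNle : (N:ℝ) ≤ 5 := by
      by_contra h
      push_neg at h
      nlinarith
    have hsum_bd : (∑ k ∈ Finset.range N, 1/(x + (k:ℝ))) ≤ 10 := by
      calc (∑ k ∈ Finset.range N, 1/(x + (k:ℝ)))
          ≤ ∑ k ∈ Finset.range N, (2:ℝ) := by
            apply Finset.sum_le_sum
            intro k _
            rw [div_le_iff₀ (by positivity)]
            have : (0:ℝ) ≤ k := Nat.cast_nonneg k
            linarith
        _ = 2 * N := by rw [Finset.sum_const, Finset.card_range]; push_cast; ring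
        _ ≤ 10 := by linarith
    have hsum_nn : (0:ℝ) ≤ ∑ k ∈ Finset.range N, 1/(x + (k:ℝ)) := by
      apply Finset.sum_nonneg
      intro k _
      positivity
    have hDx : |D x| ≤ 3 := by rw [hD]; exact psi_bound hxhalf hxlt
    have hDxN : |D (x + N)| ≤ 13 := by
      have heq : D (x + N) = D x + ∑ k ∈ Finset.range N, 1/(x + (k:ℝ)) := by
        rw [hD]; exact deriv_lg_sum hx N
      have h1 : -3 ≤ D x := (abs_le.mp hDx).1
      have h2 : D x ≤ 3 := (abs_le.mp hDx).2
      rw [heq, abs_le]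
      refine ⟨by linarith, by linarith⟩
    have hlu1 : Real.log u ≤ u - 1 := Real.log_le_sub_one_of_pos hu0
    have hlu2 : -Real.log u ≤ 1/u - 1 := by
      have := Real.log_le_sub_one_of_pos (show (0:ℝ) < 1/u by positivity)
      rw [Real.log_div one_ne_zero hu0.ne', Real.log_one, zero_sub] at this
      linarith
    have hu4 : u < 4 := by rw [hu, div_lt_iff₀ haR0]; linarith
    have huw : 1/u = (a:ℝ)/w := by rw [hu]; field_simp
    have h1 : -13 ≤ D (x + N) := (abs_le.mp hDxN).1
    have h2 : D (x + N) ≤ 13 := (abs_le.mp hDxN).2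
    have haa : 2*(a:ℝ) ≤ (a:ℝ)*a := mul_le_mul_of_nonneg_right haR haR0.le
    have hupper : 12 + (a:ℝ)/w ≤ 100 * a * a / w := by
      rw [show (12:ℝ) + (a:ℝ)/w = (12*w + a)/w by field_simp]
      rw [show (100:ℝ) * a * a = 100 * ((a:ℝ)*a) by ring]
      exact (div_le_div_iff_of_pos_right hw).mpr (by linarith)
    have hlower : (16:ℝ) ≤ 100 * a * a / w := by
      rw [le_div_iff₀ hw, show (100:ℝ) * a * a = 100 * ((a:ℝ)*a) by ring]
      linarith
    rw [abs_le]
    constructor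
    · have : Real.log u - D (x + N) ≤ 16 := by linarith
      linarith
    · have : D (x + N) - Real.log u ≤ 12 + (a:ℝ)/w := by
        rw [← huw]; linarith
      linarith
end

section
/- For every integer $a \ge 1$, $-\sum_{m \mid a} \frac{\mu(m)}{m} \log m = \frac{\phi(a)}{a} \sum_{p \mid a} \frac{\log p}{p-1}$, where the left sum is over the positive divisors $m$ of $a$ and the right sum over the primes $p$ dividing $a$. -/
open Finset ArithmeticFunction

private lemma prod_one_sub_inv (S : Finset ℕ) :
    ∑ t ∈ S.powerset, (-1 : ℝ) ^ t.card * ∏ p ∈ t, (1 / (p : ℝ))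
      = ∏ p ∈ S, (1 - 1 / (p : ℝ)) := by
  classical
  induction S using Finset.induction_on with
  | empty => simp
  | @insert q S hq ih =>
    rw [Finset.sum_powerset_insert hq, Finset.prod_insert hq, ← ih]
    have h : ∀ t ∈ S.powerset, (-1 : ℝ) ^ (insert q t).card * ∏ p ∈ insert q t, (1 / (p : ℝ))
        = -(1 / (q : ℝ)) * ((-1 : ℝ) ^ t.card * ∏ p ∈ t, (1 / (p : ℝ))) := by
      intro t ht
      have hqt : q ∉ t := fun h => hq (Finset.mem_powerset.mp ht h)
      rw [Finset.card_insert_of_notMem hqt, Finset.prod_insert hqt, pow_succ]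
      ring
    rw [Finset.sum_congr rfl h, ← Finset.mul_sum]
    ring

private lemma key_sum (S : Finset ℕ) (hS : ∀ p ∈ S, 2 ≤ p) :
    -∑ t ∈ S.powerset, (-1 : ℝ) ^ t.card * (∏ p ∈ t, (1 / (p : ℝ))) * ∑ q ∈ t, Real.log q
      = (∏ p ∈ S, (1 - 1 / (p : ℝ))) * ∑ q ∈ S, Real.log q / ((q : ℝ) - 1) := by
  classical
  induction S using Finset.induction_on with
  | empty => simp
  | @insert q S hq ih =>
    have hq2 : (2 : ℝ) ≤ (q : ℝ) := by exact_mod_cast hS q (Finset.mem_insert_self q S)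
    have hq0 : (q : ℝ) ≠ 0 := by linarith
    have hq1 : (q : ℝ) - 1 ≠ 0 := by intro h; nlinarith
    have ihS := ih (fun p hp => hS p (Finset.mem_insert_of_mem hp))
    rw [Finset.sum_powerset_insert hq, Finset.prod_insert hq, Finset.sum_insert hq]
    have h : ∀ t ∈ S.powerset,
        (-1 : ℝ) ^ (insert q t).card * (∏ p ∈ insert q t, (1 / (p : ℝ)))
            * ∑ r ∈ insert q t, Real.log r
        = -(1 / (q : ℝ)) * ((-1 : ℝ) ^ t.card * (∏ p ∈ t, (1 / (p : ℝ)))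
            * ∑ r ∈ t, Real.log r)
          - (1 / (q : ℝ)) * Real.log q * ((-1 : ℝ) ^ t.card * ∏ p ∈ t, (1 / (p : ℝ))) := by
      intro t ht
      have hqt : q ∉ t := fun h => hq (Finset.mem_powerset.mp ht h)
      rw [Finset.card_insert_of_notMem hqt, Finset.prod_insert hqt, Finset.sum_insert hqt,
        pow_succ]
      ring
    rw [Finset.sum_congr rfl h, Finset.sum_sub_distrib, ← Finset.mul_sum, ← Finset.mul_sum,
      prod_one_sub_inv]
    have expand : (1 - 1 / (q : ℝ)) * (Real.log q / ((q : ℝ) - 1))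
        = Real.log q / (q : ℝ) := by
      field_simp
    calc -(∑ t ∈ S.powerset, (-1:ℝ) ^ t.card * (∏ p ∈ t, (1 / (p:ℝ))) * ∑ r ∈ t, Real.log r
          + (-(1 / (q:ℝ)) * ∑ t ∈ S.powerset,
              (-1:ℝ) ^ t.card * (∏ p ∈ t, (1 / (p:ℝ))) * ∑ r ∈ t, Real.log r
            - 1 / (q:ℝ) * Real.log q * ∏ p ∈ S, (1 - 1 / (p:ℝ))))
        = (1 - 1 / (q:ℝ)) * ((∏ p ∈ S, (1 - 1 / (p:ℝ))) * ∑ r ∈ S, Real.log r / ((r:ℝ) - 1))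
            + Real.log q / (q:ℝ) * ∏ p ∈ S, (1 - 1 / (p:ℝ)) := by
          rw [← ihS]; ring
      _ = (1 - 1 / (q:ℝ)) * (∏ p ∈ S, (1 - 1 / (p:ℝ)))
            * (Real.log q / ((q:ℝ) - 1) + ∑ r ∈ S, Real.log r / ((r:ℝ) - 1)) := by
          rw [← expand]; ring

theorem moebius_log_sum_eq (a : ℕ) (ha : 1 ≤ a) :
    -(∑ m ∈ a.divisors, (ArithmeticFunction.moebius m : ℝ) / m * Real.log m)
      = (a.totient : ℝ) / a * ∑ p ∈ a.primeFactors, Real.log p / ((p : ℝ) - 1) := by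
  classical
  have ha0 : a ≠ 0 := Nat.one_le_iff_ne_zero.mp ha
  have ha0' : (a : ℝ) ≠ 0 := Nat.cast_ne_zero.mpr ha0
  -- restrict to squarefree divisors
  have h1 : ∑ m ∈ a.divisors, (ArithmeticFunction.moebius m : ℝ) / m * Real.log m
      = ∑ m ∈ a.divisors with Squarefree m,
          (ArithmeticFunction.moebius m : ℝ) / m * Real.log m := by
    refine (Finset.sum_filter_of_ne ?_).symm
    intro m _ hm
    by_contra hsq
    exact hm (by rw [ArithmeticFunction.moebius_eq_zero_of_not_squarefree hsq]; simp)
  rw [h1, Nat.sum_divisors_filter_squarefree ha0, Nat.factors_eq]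
  simp only [List.toFinset_coe, Nat.toFinset_factors, Finset.prod_val, Function.id_def]
  -- rewrite each term
  have h2 : ∀ t ∈ a.primeFactors.powerset,
      (ArithmeticFunction.moebius (∏ p ∈ t, p) : ℝ) / ((∏ p ∈ t, p : ℕ) : ℝ)
          * Real.log ((∏ p ∈ t, p : ℕ) : ℝ)
      = (-1 : ℝ) ^ t.card * (∏ p ∈ t, (1 / (p : ℝ))) * ∑ q ∈ t, Real.log q := by
    intro t ht
    have hts := Finset.mem_powerset.mp ht
    have hp : ∀ p ∈ t, p.Prime := fun p hp => Nat.prime_of_mem_primeFactors (hts hp)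
    have hmu : ArithmeticFunction.moebius (∏ p ∈ t, p) = (-1) ^ t.card := by
      rw [ArithmeticFunction.isMultiplicative_moebius.map_prod_of_subset_primeFactors a t hts]
      rw [Finset.prod_congr rfl fun p hpt => ArithmeticFunction.moebius_apply_prime (hp p hpt),
        Finset.prod_const]
    have hcast : ((∏ p ∈ t, p : ℕ) : ℝ) = ∏ p ∈ t, (p : ℝ) := by push_cast; rfl
    have hlog : Real.log ((∏ p ∈ t, p : ℕ) : ℝ) = ∑ q ∈ t, Real.log q := by
      rw [hcast]
      exact Real.log_prod (s := t) fun p hpt => Nat.cast_ne_zero.mpr (hp p hpt).ne_zero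
    rw [hmu, hlog, hcast]
    push_cast
    simp only [div_eq_mul_inv, Finset.prod_inv_distrib, one_div, one_mul]
  rw [Finset.sum_congr rfl h2]
  -- totient formula
  have h3 : (a.totient : ℝ) / a = ∏ p ∈ a.primeFactors, (1 - 1 / (p : ℝ)) := by
    have := congrArg (Rat.cast : ℚ → ℝ) (Nat.totient_eq_mul_prod_factors a)
    push_cast at this
    rw [this]
    field_simp
  rw [h3]
  exact key_sum a.primeFactors fun p hp => (Nat.prime_of_mem_primeFactors hp).two_le
end

section
/- There is an absolute constant $K$ such that for every integer $a \ge 1$ and every real $w \ge 1$, $\sum_{\substack{1 \le n \le w \\ \gcd(n,a) = 1}} \frac{1}{n} = \frac{\phi(a)}{a}\left(\log w + \sum_{p \mid a} \frac{\log p}{p-1} + \gamma\right) + E(a,w)$ with $|E(a,w)| \le K\, d(a)/w$, where the sum on the right runs over primes $p$ dividing $a$. -/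
open Finset
open Real ArithmeticFunction
open scoped ArithmeticFunction.Moebius ArithmeticFunction.zeta


-- Lemma A: harmonic bound
lemma harmA (n : ℕ) (hn : 1 ≤ n) :
    |(∑ i ∈ Finset.Icc 1 n, (1 : ℝ) / i) - Real.log n - Real.eulerMascheroniConstant| ≤ 1 / n := by
  have hn0 : (0:ℝ) < n := by exact_mod_cast hn
  have hsum : (harmonic n : ℝ) = ∑ i ∈ Finset.Icc 1 n, (1 : ℝ) / i := by
    rw [harmonic_eq_sum_Icc]
    push_cast
    simp [one_div]
  have h1 : Real.eulerMascheroniConstant < (harmonic n : ℝ) - Real.log n := by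
    have := Real.eulerMascheroniConstant_lt_eulerMascheroniSeq' n
    rwa [Real.eulerMascheroniSeq', if_neg (by omega)] at this
  have h2 : (harmonic n : ℝ) - Real.log (n + 1) < Real.eulerMascheroniConstant := by
    have := Real.eulerMascheroniSeq_lt_eulerMascheroniConstant n
    rwa [Real.eulerMascheroniSeq] at this
  have h3 : Real.log (n + 1) - Real.log n ≤ 1 / n := by
    rw [← Real.log_div (by positivity) (by positivity)]
    have := Real.log_le_sub_one_of_pos (x := ((n:ℝ)+1)/n) (by positivity)
    calc Real.log (((n:ℝ)+1)/n) ≤ ((n:ℝ)+1)/n - 1 := this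
      _ = 1/n := by field_simp; ring
  rw [abs_le, ← hsum]
  constructor
  · nlinarith [h1, hn0]
  · nlinarith [h2, h3]


lemma harmB (x : ℝ) (hx : 0 < x) :
    |(∑ i ∈ Finset.Icc 1 ⌊x⌋₊, (1 : ℝ) / i) - Real.log x - Real.eulerMascheroniConstant| ≤ 4 / x := by
  have hg1 : (1:ℝ)/2 < Real.eulerMascheroniConstant := Real.one_half_lt_eulerMascheroniConstant
  have hg2 : Real.eulerMascheroniConstant < 2/3 := Real.eulerMascheroniConstant_lt_two_thirds
  rcases Nat.eq_zero_or_pos ⌊x⌋₊ with h0 | hpos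
  · have hx1 : x < 1 := by
      have := (Nat.floor_eq_zero (R := ℝ)).mp h0
      linarith
    have hinv : 1 < 1/x := by rw [lt_div_iff₀ hx]; linarith
    have hlog : -Real.log x ≤ 1/x - 1 := by
      have := Real.log_le_sub_one_of_pos (x := x⁻¹) (by positivity)
      rw [Real.log_inv] at this
      simpa [one_div] using this
    have hlog0 : Real.log x < 0 := Real.log_neg hx hx1
    rw [h0]
    rw [show Finset.Icc 1 0 = (∅ : Finset ℕ) by simp, Finset.sum_empty]
    have e1 : 4/x = 4*(1/x) := by ring
    rw [abs_le]
    constructor <;> nlinarith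
  · have hn : (1:ℝ) ≤ ⌊x⌋₊ := by exact_mod_cast hpos
    have hNpos : (0:ℝ) < ⌊x⌋₊ := by linarith
    have hfl : (⌊x⌋₊ : ℝ) ≤ x := Nat.floor_le hx.le
    have hfl2 : x < ⌊x⌋₊ + 1 := Nat.lt_floor_add_one x
    have hA := abs_le.mp (harmA ⌊x⌋₊ hpos)
    have hlog : Real.log x - Real.log ⌊x⌋₊ ≤ 1 / ⌊x⌋₊ := by
      rw [← Real.log_div (by positivity) (by positivity)]
      have := Real.log_le_sub_one_of_pos (x := x / ⌊x⌋₊) (by positivity)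
      calc Real.log (x / ⌊x⌋₊) ≤ x / ⌊x⌋₊ - 1 := this
        _ ≤ 1 / ⌊x⌋₊ := by
          rw [div_sub_one (by positivity), div_le_div_iff₀ (by positivity) (by positivity)]
          nlinarith
    have hlog0 : 0 ≤ Real.log x - Real.log ⌊x⌋₊ := by
      have := Real.log_le_log (by positivity) hfl
      linarith
    have h2N : 2 / (⌊x⌋₊:ℝ) ≤ 4 / x := by
      rw [div_le_div_iff₀ hNpos hx]
      nlinarith
    have e2 : 2/(⌊x⌋₊:ℝ) = 2*(1/(⌊x⌋₊:ℝ)) := by ring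
    rw [abs_le]
    constructor <;> nlinarith [hA.1, hA.2]


lemma powersetId (P : Finset ℕ) (hP : ∀ p ∈ P, 2 ≤ p) (c : ℝ) :
    ∑ t ∈ P.powerset, (-1 : ℝ) ^ t.card * (c - Real.log (∏ p ∈ t, (p : ℝ))) / (∏ p ∈ t, (p : ℝ))
      = (∏ p ∈ P, (1 - 1 / (p : ℝ))) * (c + ∑ p ∈ P, Real.log p / ((p : ℝ) - 1)) := by
  induction P using Finset.induction_on generalizing c with
  | empty => simp
  | insert _ _ ha =>
    rename_i a s ih
    have ha2 : (2:ℝ) ≤ a := by exact_mod_cast hP a (Finset.mem_insert_self a s)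
    have hs2 : ∀ p ∈ s, 2 ≤ p := fun p hp => hP p (Finset.mem_insert_of_mem hp)
    have hprodpos : ∀ t : Finset ℕ, t ⊆ s → (0:ℝ) < ∏ p ∈ t, (p:ℝ) := by
      intro t ht
      apply Finset.prod_pos
      intro p hp
      have := hs2 p (ht hp)
      positivity
    rw [Finset.sum_powerset_insert ha]
    have step2 : ∑ t ∈ s.powerset,
        (-1 : ℝ) ^ (insert a t).card * (c - Real.log (∏ p ∈ insert a t, (p : ℝ)))
          / (∏ p ∈ insert a t, (p : ℝ))
        = (-(1:ℝ)/a) * ∑ t ∈ s.powerset,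
            (-1 : ℝ) ^ t.card * ((c - Real.log a) - Real.log (∏ p ∈ t, (p : ℝ)))
              / (∏ p ∈ t, (p : ℝ)) := by
      rw [Finset.mul_sum]
      apply Finset.sum_congr rfl
      intro t ht
      rw [Finset.mem_powerset] at ht
      have hat : a ∉ t := fun h => ha (ht h)
      rw [Finset.card_insert_of_notMem hat, Finset.prod_insert hat,
        Real.log_mul (by positivity) (hprodpos t ht).ne', pow_succ]
      have := (hprodpos t ht).ne'
      have ha0 : (a:ℝ) ≠ 0 := by positivity
      field_simp
      ring
    rw [step2, ih hs2, ih hs2, Finset.prod_insert ha, Finset.sum_insert ha]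
    have ha0 : (a:ℝ) ≠ 0 := by positivity
    have ha1 : (a:ℝ) - 1 ≠ 0 := by nlinarith
    field_simp
    ring


lemma squarefree_prod_primes {t : Finset ℕ} (ht : ∀ p ∈ t, p.Prime) :
    Squarefree (∏ p ∈ t, p) := by
  induction t using Finset.induction_on with
  | empty => simpa using squarefree_one
  | insert _ _ ha =>
    rename_i a s ih
    have hap : a.Prime := ht a (Finset.mem_insert_self a s)
    have hs : ∀ p ∈ s, p.Prime := fun p hp => ht p (Finset.mem_insert_of_mem hp)
    rw [Finset.prod_insert ha]
    apply Nat.squarefree_mul _ |>.mpr ⟨hap.squarefree, ih hs⟩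
    rw [Nat.Prime.coprime_iff_not_dvd hap, hap.prime.dvd_finset_prod_iff]
    rintro ⟨q, hq, hdvd⟩
    exact ha (((hs q hq).dvd_iff_eq hap.ne_one).mp hdvd ▸ hq)

lemma moebius_powerset (a : ℕ) (ha : a ≠ 0) (g : ℕ → ℝ) :
    ∑ d ∈ a.divisors, (μ d : ℝ) * g d
      = ∑ t ∈ a.primeFactors.powerset, (-1 : ℝ) ^ t.card * g (∏ p ∈ t, p) := by
  rw [← Finset.sum_filter_of_ne (p := fun d => Squarefree d)
    (fun d _ h => by by_contra hsq; rw [moebius_eq_zero_of_not_squarefree hsq] at h; simp at h)]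
  apply Finset.sum_nbij' (i := fun d => d.primeFactors) (j := fun t => ∏ p ∈ t, p)
  · intro d hd
    rw [Finset.mem_filter, Nat.mem_divisors] at hd
    rw [Finset.mem_powerset]
    exact Nat.primeFactors_mono hd.1.1 ha
  · intro t ht
    rw [Finset.mem_powerset] at ht
    have htp : ∀ p ∈ t, p.Prime := fun p hp => Nat.prime_of_mem_primeFactors (ht hp)
    rw [Finset.mem_filter, Nat.mem_divisors]
    exact ⟨⟨(Finset.prod_dvd_prod_of_subset _ _ _ ht).trans (Nat.prod_primeFactors_dvd a), ha⟩,
      squarefree_prod_primes htp⟩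
  · intro d hd
    rw [Finset.mem_filter] at hd
    exact Nat.prod_primeFactors_of_squarefree hd.2
  · intro t ht
    rw [Finset.mem_powerset] at ht
    exact Nat.primeFactors_prod (fun p hp => Nat.prime_of_mem_primeFactors (ht hp))
  · intro d hd
    rw [Finset.mem_filter] at hd
    rw [Nat.prod_primeFactors_of_squarefree hd.2]
    congr 1
    rw [moebius_apply_of_squarefree hd.2]
    push_cast
    congr 1
    rw [ArithmeticFunction.cardFactors_apply, Nat.primeFactors, List.card_toFinset,
      ((Nat.squarefree_iff_nodup_primeFactorsList hd.2.ne_zero).mp hd.2).dedup]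


lemma totient_div_eq_prod (a : ℕ) (ha : a ≠ 0) :
    (a.totient : ℝ) / a = ∏ p ∈ a.primeFactors, (1 - 1 / (p : ℝ)) := by
  have h := Nat.totient_eq_mul_prod_factors a
  have h' : (a.totient : ℝ) = a * ∏ p ∈ a.primeFactors, (1 - 1 / (p : ℝ)) := by
    have := congrArg (fun q : ℚ => (q : ℝ)) h
    push_cast at this
    simpa [one_div] using this
  rw [h']
  have ha0 : (a:ℝ) ≠ 0 := Nat.cast_ne_zero.mpr ha
  field_simp

lemma moebius_indicator (m : ℕ) (hm : m ≠ 0) :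
    ∑ d ∈ m.divisors, (μ d : ℝ) = if m = 1 then 1 else 0 := by
  have h : ((μ * ζ : ArithmeticFunction ℤ) m : ℝ) = ((1 : ArithmeticFunction ℤ) m : ℝ) := by
    rw [moebius_mul_coe_zeta]
  rw [coe_mul_zeta_apply, one_apply] at h
  push_cast at h
  rw [h]

theorem sum_reciprocal_coprime :
    ∃ K : ℝ, ∀ (a : ℕ) (w : ℝ), 1 ≤ a → 1 ≤ w →
      |(∑ n ∈ (Finset.Icc 1 ⌊w⌋₊).filter (fun n : ℕ => Nat.gcd n a = 1), (1 : ℝ) / n)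
          - (a.totient : ℝ) / a *
              (Real.log w + ∑ p ∈ a.primeFactors, Real.log p / ((p : ℝ) - 1)
                + Real.eulerMascheroniConstant)|
        ≤ K * (a.divisors.card : ℝ) / w := by
  use 4
  intro a w ha1 hw
  have ha : a ≠ 0 := by omega
  have hw0 : (0:ℝ) < w := by linarith
  set γ := Real.eulerMascheroniConstant with hγ
  set N := ⌊w⌋₊ with hN
  set T : ℝ := (a.totient : ℝ) / a *
      (Real.log w + ∑ p ∈ a.primeFactors, Real.log p / ((p : ℝ) - 1) + γ) with hT
  set Hd : ℕ → ℝ := fun d => ∑ m ∈ Finset.Icc 1 ⌊w / (d:ℝ)⌋₊, (1:ℝ)/m with hHd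
  -- Step 1: indicator
  have step1 : (∑ n ∈ (Finset.Icc 1 N).filter (fun n : ℕ => Nat.gcd n a = 1), (1 : ℝ) / n)
      = ∑ n ∈ Finset.Icc 1 N, ∑ d ∈ a.divisors.filter (· ∣ n), (μ d : ℝ) / n := by
    rw [Finset.sum_filter]
    apply Finset.sum_congr rfl
    intro n hn
    have hdiv : a.divisors.filter (· ∣ n) = (Nat.gcd n a).divisors := by
      ext d
      simp only [Finset.mem_filter, Nat.mem_divisors, Nat.dvd_gcd_iff]
      constructor
      · rintro ⟨⟨hda, _⟩, hdn⟩; exact ⟨⟨hdn, hda⟩, Nat.gcd_ne_zero_right ha⟩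
      · rintro ⟨⟨hdn, hda⟩, _⟩; exact ⟨⟨hda, ha⟩, hdn⟩
    rw [hdiv, ← Finset.sum_div, moebius_indicator _ (Nat.gcd_ne_zero_right ha)]
    split <;> simp
  -- Step 2: swap
  have step2 : ∑ n ∈ Finset.Icc 1 N, ∑ d ∈ a.divisors.filter (· ∣ n), (μ d : ℝ) / n
      = ∑ d ∈ a.divisors, ∑ n ∈ (Finset.Icc 1 N).filter (fun n => d ∣ n), (μ d : ℝ) / n := by
    apply Finset.sum_comm'
    intro n d
    simp only [Finset.mem_filter]
    tauto
  -- Step 3: inner reindex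
  have step3 : ∀ d ∈ a.divisors,
      (∑ n ∈ (Finset.Icc 1 N).filter (fun n => d ∣ n), (μ d : ℝ) / n)
        = (μ d : ℝ) / d * Hd d := by
    intro d hd
    have hd0 : d ≠ 0 := Nat.pos_of_mem_divisors hd |>.ne'
    have hd1 : 1 ≤ d := Nat.pos_of_mem_divisors hd
    have hdr : (0:ℝ) < d := by exact_mod_cast hd1
    have hNd : ⌊w / (d:ℝ)⌋₊ = N / d := by rw [hN, Nat.floor_div_natCast]
    rw [hHd]
    simp only [hNd, Finset.mul_sum]
    apply Finset.sum_nbij' (i := fun n => n / d) (j := fun m => d * m)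
    · intro n hn
      rw [Finset.mem_filter, Finset.mem_Icc] at hn
      rw [Finset.mem_Icc]
      obtain ⟨⟨h1n, hnN⟩, hdn⟩ := hn
      constructor
      · rw [Nat.one_le_div_iff (by omega)]
        exact Nat.le_of_dvd (by omega) hdn
      · exact Nat.div_le_div_right hnN
    · intro m hm
      rw [Finset.mem_Icc] at hm
      rw [Finset.mem_filter, Finset.mem_Icc]
      refine ⟨⟨Nat.mul_pos (by omega) hm.1, ?_⟩, Dvd.intro m rfl⟩
      rw [mul_comm]
      exact (Nat.le_div_iff_mul_le (by omega)).mp hm.2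
    · intro n hn
      rw [Finset.mem_filter] at hn
      exact Nat.mul_div_cancel' hn.2
    · intro m _
      exact Nat.mul_div_cancel_left m (by omega)
    · intro n hn
      rw [Finset.mem_filter, Finset.mem_Icc] at hn
      have hn0 : (0:ℝ) < n := by exact_mod_cast hn.1.1
      have hcast : ((n / d : ℕ) : ℝ) = (n:ℝ) / d := Nat.cast_div hn.2 hdr.ne'
      rw [hcast]
      field_simp
  -- Combine: S = ∑ d, μ/d * Hd d
  have hS : (∑ n ∈ (Finset.Icc 1 N).filter (fun n : ℕ => Nat.gcd n a = 1), (1 : ℝ) / n)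
      = ∑ d ∈ a.divisors, (μ d : ℝ) / d * Hd d := by
    rw [step1, step2]
    exact Finset.sum_congr rfl step3
  -- Main term
  have hMain : ∑ d ∈ a.divisors, (μ d : ℝ) / d * (Real.log w - Real.log d + γ) = T := by
    have e1 : ∀ d ∈ a.divisors, (μ d : ℝ) / d * (Real.log w - Real.log d + γ)
        = (μ d : ℝ) * ((1/(d:ℝ)) * ((Real.log w + γ) - Real.log d)) := by
      intro d _; ring
    rw [Finset.sum_congr rfl e1,
      moebius_powerset a ha (fun d => (1/(d:ℝ)) * ((Real.log w + γ) - Real.log (d:ℝ)))]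
    have e2 : ∀ t ∈ a.primeFactors.powerset,
        (-1 : ℝ) ^ t.card * ((1/((∏ p ∈ t, p : ℕ):ℝ)) * ((Real.log w + γ) - Real.log ((∏ p ∈ t, p : ℕ):ℝ)))
          = (-1 : ℝ) ^ t.card * ((Real.log w + γ) - Real.log (∏ p ∈ t, (p:ℝ))) / (∏ p ∈ t, (p:ℝ)) := by
      intro t _
      rw [Nat.cast_prod]
      ring
    rw [Finset.sum_congr rfl e2,
      powersetId a.primeFactors (fun p hp => (Nat.prime_of_mem_primeFactors hp).two_le) (Real.log w + γ),
      ← totient_div_eq_prod a ha, hT]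
    ring
  -- Error bound
  have hErr : |∑ d ∈ a.divisors, (μ d : ℝ) / d * (Hd d - (Real.log w - Real.log d + γ))|
      ≤ 4 * (a.divisors.card : ℝ) / w := by
    calc |∑ d ∈ a.divisors, (μ d : ℝ) / d * (Hd d - (Real.log w - Real.log d + γ))|
        ≤ ∑ d ∈ a.divisors, |(μ d : ℝ) / d * (Hd d - (Real.log w - Real.log d + γ))| :=
          Finset.abs_sum_le_sum_abs _ _
      _ ≤ ∑ d ∈ a.divisors, 4 / w := by
          apply Finset.sum_le_sum
          intro d hd
          have hd1 : 1 ≤ d := Nat.pos_of_mem_divisors hd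
          have hdr : (0:ℝ) < d := by exact_mod_cast hd1
          have hE := harmB (w / d) (by positivity)
          rw [Real.log_div hw0.ne' hdr.ne'] at hE
          have hE' : |Hd d - (Real.log w - Real.log d + γ)| ≤ 4 * d / w := by
            have e3 : 4 / (w / (d:ℝ)) = 4 * d / w := by field_simp
            rw [hHd]
            rw [sub_sub] at hE
            exact e3 ▸ hE
          have habs : |(μ d : ℝ)| ≤ 1 := by
            have := abs_moebius_le_one (n := d)
            exact_mod_cast this
          have hμ : |(μ d : ℝ) / d| ≤ 1 / d := by
            rw [abs_div, Nat.abs_cast]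
            gcongr
          calc |(μ d : ℝ) / d * (Hd d - (Real.log w - Real.log d + γ))|
              = |(μ d : ℝ) / d| * |Hd d - (Real.log w - Real.log d + γ)| := abs_mul _ _
            _ ≤ (1/d) * (4 * d / w) := by
                apply mul_le_mul hμ hE' (abs_nonneg _) (by positivity)
            _ = 4 / w := by field_simp
      _ = (a.divisors.card : ℝ) * (4 / w) := by rw [Finset.sum_const, nsmul_eq_mul]
      _ = 4 * (a.divisors.card : ℝ) / w := by ring
  have hsplit : ∀ d ∈ a.divisors, (μ d : ℝ) / d * Hd d
      = (μ d : ℝ) / d * (Real.log w - Real.log d + γ)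
        + (μ d : ℝ) / d * (Hd d - (Real.log w - Real.log d + γ)) := by
    intro d _; ring
  rw [hS, Finset.sum_congr rfl hsplit, Finset.sum_add_distrib, hMain]
  simpa using hErr
end

section
/- Let $a > 1$ and $N \ge 0$ be integers, and for each nonnegative integer $n$ let $R_a(n)$ denote the number of ordered pairs $(x,y)$ of positive integers with $axy - x - y = n$. Then $\sum_{0 \le n \le N} R_a(n) = \frac{1}{\phi(a)^2} \sum_{\chi_1 \ (\mathrm{mod}\ a)} \sum_{\chi_2 \ (\mathrm{mod}\ a)} \overline{\chi_1}(-1)\, \overline{\chi_2}(-1) \sum_{m = 1}^{aN+1} \sum_{uv = m} \chi_1(u) \chi_2(v)$, where the two outer sums run over all Dirichlet characters modulo $a$ and the innermost sum runs over ordered pairs of positive integers $(u,v)$ with $uv = m$. -/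
open Finset

/-- `R a n` is the number of ordered pairs `(x, y)` of positive integers with
`a * x * y - x - y = n` (stated subtraction-free as `a * x * y = x + y + n`). -/
noncomputable def R (a n : ℕ) : ℕ :=
  Set.ncard {p : ℕ × ℕ | 0 < p.1 ∧ 0 < p.2 ∧ a * p.1 * p.2 = p.1 + p.2 + n}

noncomputable def D (a m : ℕ) : Finset ℕ :=
  m.divisors.filter (fun u => ((u : ZMod a) = -1 ∧ ((m / u : ℕ) : ZMod a) = -1))

lemma dvd_of_cast_neg_one {a u : ℕ} (ha : 1 < a) (h : ((u : ℕ) : ZMod a) = -1) :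
    a ∣ u + 1 := by
  haveI : NeZero a := ⟨by omega⟩
  rw [← ZMod.natCast_eq_zero_iff]
  push_cast
  rw [h]; ring

lemma R_eq_card (a : ℕ) (ha : 1 < a) (n : ℕ) : R a n = (D a (a * n + 1)).card := by
  haveI : NeZero a := ⟨by omega⟩
  have key : {p : ℕ × ℕ | 0 < p.1 ∧ 0 < p.2 ∧ a * p.1 * p.2 = p.1 + p.2 + n}
      = (fun u : ℕ => ((u + 1) / a, ((a * n + 1) / u + 1) / a)) '' ↑(D a (a * n + 1)) := by
    ext ⟨x, y⟩
    simp only [Set.mem_setOf_eq, Set.mem_image, D, Nat.mem_divisors,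
      Finset.mem_coe, Finset.mem_filter]
    constructor
    · rintro ⟨hx, hy, heq⟩
      have hx1 : 1 ≤ a * x := Nat.mul_pos (by omega) hx
      have hy1 : 1 ≤ a * y := Nat.mul_pos (by omega) hy
      obtain ⟨u, hu⟩ : ∃ u, u + 1 = a * x := ⟨a * x - 1, by omega⟩
      obtain ⟨v, hv⟩ : ∃ v, v + 1 = a * y := ⟨a * y - 1, by omega⟩
      have h1 : u * v + u + v + 1 = (u + 1) + (v + 1) + a * n := by
        calc u * v + u + v + 1 = (u + 1) * (v + 1) := by ring
          _ = (a * x) * (a * y) := by rw [hu, hv]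
          _ = a * (a * x * y) := by ring
          _ = a * (x + y + n) := by rw [heq]
          _ = (a * x) + (a * y) + a * n := by ring
          _ = (u + 1) + (v + 1) + a * n := by rw [hu, hv]
      have huv : u * v = a * n + 1 := by omega
      have hu0 : 0 < u := by
        have : a * 1 ≤ a * x := Nat.mul_le_mul_left a hx
        omega
      have hmu : (a * n + 1) / u = v := by
        rw [← huv, Nat.mul_div_cancel_left _ hu0]
      have hucast : ((u : ℕ) : ZMod a) = -1 := by
        have h2 : ((u + 1 : ℕ) : ZMod a) = 0 := by
          rw [hu]; push_cast; simp [ZMod.natCast_self]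
        push_cast at h2
        linear_combination h2
      have hvcast : ((v : ℕ) : ZMod a) = -1 := by
        have h2 : ((v + 1 : ℕ) : ZMod a) = 0 := by
          rw [hv]; push_cast; simp [ZMod.natCast_self]
        push_cast at h2
        linear_combination h2
      refine ⟨u, ⟨⟨⟨v, huv.symm⟩, by omega⟩, hucast, by rw [hmu]; exact hvcast⟩, ?_⟩
      rw [hmu, hu, hv, Nat.mul_div_cancel_left _ (by omega : 0 < a),
        Nat.mul_div_cancel_left _ (by omega : 0 < a)]
    · rintro ⟨u, ⟨⟨hdvd, -⟩, hu1, hv1⟩, hmap⟩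
      obtain ⟨x', hx'⟩ := dvd_of_cast_neg_one ha hu1
      obtain ⟨y', hy'⟩ := dvd_of_cast_neg_one ha hv1
      have hu0 : 0 < u := by
        rcases Nat.eq_zero_or_pos u with h | h
        · exfalso; rw [h] at hdvd; have := Nat.eq_zero_of_zero_dvd hdvd; omega
        · exact h
      have huv : u * ((a * n + 1) / u) = a * n + 1 := Nat.mul_div_cancel' hdvd
      have hxx : x = x' ∧ y = y' := by
        rw [hx', hy'] at hmap
        rw [Nat.mul_div_cancel_left _ (by omega : 0 < a),
          Nat.mul_div_cancel_left _ (by omega : 0 < a)] at hmap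
        exact ⟨congrArg Prod.fst hmap.symm, congrArg Prod.snd hmap.symm⟩
      obtain ⟨hxe, hye⟩ := hxx
      subst hxe; subst hye
      have hx'0 : 0 < x := by
        rcases Nat.eq_zero_or_pos x with h | h
        · rw [h, Nat.mul_zero] at hx'; omega
        · exact h
      have hy'0 : 0 < y := by
        rcases Nat.eq_zero_or_pos y with h | h
        · rw [h, Nat.mul_zero] at hy'; exact (Nat.succ_ne_zero _ hy').elim
        · exact h
      refine ⟨hx'0, hy'0, ?_⟩
      have h1 : a * (a * x * y) = a * (x + y + n) := by
        calc a * (a * x * y) = (a * x) * (a * y) := by ring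
          _ = (u + 1) * ((a * n + 1) / u + 1) := by rw [← hx', ← hy']
          _ = u * ((a * n + 1) / u) + u + ((a * n + 1) / u) + 1 := by ring
          _ = (a * n + 1) + u + ((a * n + 1) / u) + 1 := by rw [huv]
          _ = a * n + (u + 1) + ((a * n + 1) / u + 1) := by ring
          _ = a * n + a * x + a * y := by rw [hx', hy']
          _ = a * (x + y + n) := by ring
      exact Nat.eq_of_mul_eq_mul_left (by omega) h1
  rw [R, key, Set.ncard_image_of_injOn, Set.ncard_coe_finset]
  intro u hu u' hu' h
  simp only [Finset.mem_coe, D, Finset.mem_filter] at hu hu'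
  obtain ⟨au, hau⟩ := dvd_of_cast_neg_one ha hu.2.1
  obtain ⟨au', hau'⟩ := dvd_of_cast_neg_one ha hu'.2.1
  have h1 := congrArg Prod.fst h
  simp only at h1
  rw [hau, hau', Nat.mul_div_cancel_left _ (by omega : 0 < a),
    Nat.mul_div_cancel_left _ (by omega : 0 < a)] at h1
  rw [h1] at hau
  omega

lemma conj_char_neg_one {a : ℕ} (χ : DirichletCharacter ℂ a) :
    (starRingEnd ℂ) (χ (-1)) = χ (-1) := by
  have h : χ (-1) * χ (-1) = 1 := by
    rw [← map_mul, neg_mul_neg, one_mul, map_one]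
  rcases mul_self_eq_one_iff.mp h with h1 | h1 <;> rw [h1] <;> simp

lemma sum4_comm {M : Type*} [AddCommMonoid M] {α β γ δ : Type*} (s : Finset α) (t : Finset β)
    (w : Finset γ) (v : γ → Finset δ) (f : α → β → γ → δ → M) :
    ∑ a ∈ s, ∑ b ∈ t, ∑ c ∈ w, ∑ d ∈ v c, f a b c d
      = ∑ c ∈ w, ∑ d ∈ v c, ∑ a ∈ s, ∑ b ∈ t, f a b c d := by
  calc ∑ a ∈ s, ∑ b ∈ t, ∑ c ∈ w, ∑ d ∈ v c, f a b c d
      = ∑ a ∈ s, ∑ c ∈ w, ∑ b ∈ t, ∑ d ∈ v c, f a b c d :=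
        Finset.sum_congr rfl fun a _ => Finset.sum_comm
    _ = ∑ a ∈ s, ∑ c ∈ w, ∑ d ∈ v c, ∑ b ∈ t, f a b c d :=
        Finset.sum_congr rfl fun a _ => Finset.sum_congr rfl fun c _ => Finset.sum_comm
    _ = ∑ c ∈ w, ∑ a ∈ s, ∑ d ∈ v c, ∑ b ∈ t, f a b c d := Finset.sum_comm
    _ = ∑ c ∈ w, ∑ d ∈ v c, ∑ a ∈ s, ∑ b ∈ t, f a b c d :=
        Finset.sum_congr rfl fun c _ => Finset.sum_comm

lemma char_side (a : ℕ) (ha : 1 < a) (N : ℕ) :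
    (∑ χ₁ : DirichletCharacter ℂ a, ∑ χ₂ : DirichletCharacter ℂ a,
      (starRingEnd ℂ) (χ₁ (-1)) * (starRingEnd ℂ) (χ₂ (-1)) *
        ∑ m ∈ Finset.Icc 1 (a * N + 1),
          ∑ u ∈ m.divisors, χ₁ (↑u : ZMod a) * χ₂ (↑(m / u) : ZMod a))
      = (a.totient : ℂ) ^ 2 * ∑ m ∈ Finset.Icc 1 (a * N + 1), ((D a m).card : ℂ) := by
  haveI : NeZero a := ⟨by omega⟩
  have step1 : ∀ χ₁ χ₂ : DirichletCharacter ℂ a,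
      (starRingEnd ℂ) (χ₁ (-1)) * (starRingEnd ℂ) (χ₂ (-1)) *
        ∑ m ∈ Finset.Icc 1 (a * N + 1),
          ∑ u ∈ m.divisors, χ₁ (↑u : ZMod a) * χ₂ (↑(m / u) : ZMod a)
      = ∑ m ∈ Finset.Icc 1 (a * N + 1),
          ∑ u ∈ m.divisors, χ₁ (-(u : ZMod a)) * χ₂ (-(↑(m / u) : ZMod a)) := by
    intro χ₁ χ₂
    rw [conj_char_neg_one, conj_char_neg_one, Finset.mul_sum]
    refine Finset.sum_congr rfl fun m _ => ?_
    rw [Finset.mul_sum]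
    refine Finset.sum_congr rfl fun u _ => ?_
    rw [show (-(u : ZMod a)) = (-1) * (u : ZMod a) by ring,
      show (-((m / u : ℕ) : ZMod a)) = (-1) * ((m / u : ℕ) : ZMod a) by ring,
      map_mul, map_mul]
    ring
  calc ∑ χ₁ : DirichletCharacter ℂ a, ∑ χ₂ : DirichletCharacter ℂ a,
        (starRingEnd ℂ) (χ₁ (-1)) * (starRingEnd ℂ) (χ₂ (-1)) *
          ∑ m ∈ Finset.Icc 1 (a * N + 1),
            ∑ u ∈ m.divisors, χ₁ (↑u : ZMod a) * χ₂ (↑(m / u) : ZMod a)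
      = ∑ χ₁ : DirichletCharacter ℂ a, ∑ χ₂ : DirichletCharacter ℂ a,
          ∑ m ∈ Finset.Icc 1 (a * N + 1),
            ∑ u ∈ m.divisors, χ₁ (-(u : ZMod a)) * χ₂ (-(↑(m / u) : ZMod a)) :=
        Finset.sum_congr rfl fun χ₁ _ => Finset.sum_congr rfl fun χ₂ _ => step1 χ₁ χ₂
    _ = ∑ m ∈ Finset.Icc 1 (a * N + 1), ∑ u ∈ m.divisors,
          ∑ χ₁ : DirichletCharacter ℂ a, ∑ χ₂ : DirichletCharacter ℂ a,
            χ₁ (-(u : ZMod a)) * χ₂ (-(↑(m / u) : ZMod a)) :=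
        sum4_comm _ _ _ _ _
    _ = ∑ m ∈ Finset.Icc 1 (a * N + 1), ∑ u ∈ m.divisors,
          (∑ χ₁ : DirichletCharacter ℂ a, χ₁ (-(u : ZMod a))) *
            (∑ χ₂ : DirichletCharacter ℂ a, χ₂ (-(↑(m / u) : ZMod a))) := by
        refine Finset.sum_congr rfl fun m _ => Finset.sum_congr rfl fun u _ => ?_
        rw [Finset.sum_mul_sum]
    _ = ∑ m ∈ Finset.Icc 1 (a * N + 1), ∑ u ∈ m.divisors,
          (if ((u : ZMod a) = -1 ∧ ((m / u : ℕ) : ZMod a) = -1)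
            then (a.totient : ℂ) ^ 2 else 0) := by
        refine Finset.sum_congr rfl fun m _ => Finset.sum_congr rfl fun u _ => ?_
        rw [DirichletCharacter.sum_characters_eq, DirichletCharacter.sum_characters_eq]
        simp only [neg_eq_iff_eq_neg, mul_ite, ite_mul, zero_mul, mul_zero, ← ite_and, ← sq, and_comm]
    _ = ∑ m ∈ Finset.Icc 1 (a * N + 1), ((D a m).card : ℂ) * (a.totient : ℂ) ^ 2 := by
        refine Finset.sum_congr rfl fun m _ => ?_
        rw [D, ← Finset.sum_filter, Finset.sum_const, nsmul_eq_mul]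
    _ = (a.totient : ℂ) ^ 2 * ∑ m ∈ Finset.Icc 1 (a * N + 1), ((D a m).card : ℂ) := by
        rw [Finset.mul_sum]
        exact Finset.sum_congr rfl fun m _ => mul_comm _ _

lemma sum_Icc_eq_sum_range (a : ℕ) (ha : 1 < a) (N : ℕ) :
    ∑ m ∈ Finset.Icc 1 (a * N + 1), (D a m).card
      = ∑ n ∈ Finset.range (N + 1), (D a (a * n + 1)).card := by
  haveI : NeZero a := ⟨by omega⟩
  have hinj : ∀ x ∈ Finset.range (N + 1), ∀ y ∈ Finset.range (N + 1),
      a * x + 1 = a * y + 1 → x = y := by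
    intro x _ y _ h
    have h2 : a * x = a * y := by omega
    exact Nat.eq_of_mul_eq_mul_left (by omega) h2
  have himg : ∑ m ∈ (Finset.range (N + 1)).image (fun n => a * n + 1), (D a m).card
      = ∑ n ∈ Finset.range (N + 1), (D a (a * n + 1)).card := Finset.sum_image hinj
  rw [← himg]
  symm
  apply Finset.sum_subset
  · intro m hm
    simp only [Finset.mem_image, Finset.mem_range] at hm
    obtain ⟨n, hn, rfl⟩ := hm
    have : a * n ≤ a * N := Nat.mul_le_mul_left a (by omega)
    simp only [Finset.mem_Icc]
    omega
  · intro m hm hnot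
    simp only [Finset.mem_Icc] at hm
    rw [Finset.card_eq_zero]
    by_contra hne
    obtain ⟨u, hu⟩ := Finset.nonempty_of_ne_empty hne
    simp only [D, Finset.mem_filter, Nat.mem_divisors] at hu
    obtain ⟨⟨hdvd, hm0⟩, hu1, hv1⟩ := hu
    have huv : u * (m / u) = m := Nat.mul_div_cancel' hdvd
    have hm1 : ((m - 1 : ℕ) : ZMod a) = 0 := by
      have hcast : ((m : ℕ) : ZMod a) = 1 := by
        rw [← huv]; push_cast; rw [hu1, hv1]; ring
      rw [Nat.cast_sub (by omega : 1 ≤ m), hcast]; simp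
    rw [ZMod.natCast_eq_zero_iff] at hm1
    obtain ⟨k, hk⟩ := hm1
    apply hnot
    simp only [Finset.mem_image, Finset.mem_range]
    refine ⟨k, ?_, by omega⟩
    have : a * k ≤ a * N := by omega
    have := Nat.le_of_mul_le_mul_left this (by omega : 0 < a)
    omega

theorem sum_R_eq_character_sum (a : ℕ) (ha : 1 < a) (N : ℕ) :
    (∑ n ∈ Finset.range (N + 1), (R a n : ℂ))
      = (1 / (a.totient : ℂ) ^ 2) *
          ∑ χ₁ : DirichletCharacter ℂ a, ∑ χ₂ : DirichletCharacter ℂ a,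
            (starRingEnd ℂ) (χ₁ (-1)) * (starRingEnd ℂ) (χ₂ (-1)) *
              ∑ m ∈ Finset.Icc 1 (a * N + 1),
                ∑ u ∈ m.divisors, χ₁ (↑u : ZMod a) * χ₂ (↑(m / u) : ZMod a) := by
  haveI : NeZero a := ⟨by omega⟩
  have hφ : ((a.totient : ℂ)) ≠ 0 :=
    Nat.cast_ne_zero.mpr (Nat.totient_pos.mpr (by omega)).ne'
  rw [char_side a ha N, ← mul_assoc, one_div,
    inv_mul_cancel₀ (pow_ne_zero 2 hφ), one_mul]
  have hc := congrArg (fun k : ℕ => (k : ℂ)) (sum_Icc_eq_sum_range a ha N)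
  push_cast at hc
  rw [hc]
  exact Finset.sum_congr rfl fun n _ => by rw [R_eq_card a ha n]
end
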